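/- arXiv:1309.7498 — 7 statements merged into one kernel-verified Lean document; each statement's English description precedes it below -/
import Mathlib

section
/- Let C > 0 and 0 ≤ P ≤ C²/2 be real numbers. Then the radicand R = C² − (3/2)·P − P²/C² is nonnegative, and the numbers x = P/(2C) and y = (C + √R)/2 satisfy P = 2·C·x and (3/4)·P = 2·C·y − 2·(x² + y²). -/
/-- For real `C > 0` and `0 ≤ P ≤ C²/2`, the radicand `R = C² - (3/2)·P - P²/C²` is
nonnegative, and `x = P/(2C)`, `y = (C + √R)/2` satisfy `P = 2·C·x` and
`(3/4)·P = 2·C·y - 2·(x² + y²)` (the higher-voltage power-flow solution). -/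
theorem higher_voltage_solution (C P : ℝ) (hC : 0 < C) (hP0 : 0 ≤ P) (hP1 : P ≤ C ^ 2 / 2) :
    0 ≤ C ^ 2 - 3 / 2 * P - P ^ 2 / C ^ 2 ∧
    P = 2 * C * (P / (2 * C)) ∧
    (3 / 4) * P = 2 * C * ((C + Real.sqrt (C ^ 2 - 3 / 2 * P - P ^ 2 / C ^ 2)) / 2) -
      2 * ((P / (2 * C)) ^ 2 + ((C + Real.sqrt (C ^ 2 - 3 / 2 * P - P ^ 2 / C ^ 2)) / 2) ^ 2) := by
  have hC2 : (0:ℝ) < C ^ 2 := by positivity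
  have hR : 0 ≤ C ^ 2 - 3 / 2 * P - P ^ 2 / C ^ 2 := by
    have h1 : P ^ 2 / C ^ 2 ≤ C ^ 2 / 4 := by
      rw [div_le_div_iff₀ hC2 (by norm_num : (0:ℝ) < 4)]
      nlinarith
    nlinarith [h1]
  have hs : Real.sqrt (C ^ 2 - 3 / 2 * P - P ^ 2 / C ^ 2) ^ 2
      = C ^ 2 - 3 / 2 * P - P ^ 2 / C ^ 2 := Real.sq_sqrt hR
  refine ⟨hR, by field_simp, ?_⟩
  have hCne : (C:ℝ) ≠ 0 := hC.ne'
  set s := Real.sqrt (C ^ 2 - 3 / 2 * P - P ^ 2 / C ^ 2) with hsdef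
  field_simp at hs ⊢
  linear_combination 2 * hs
end

section
/- The function φ ↦ 𝒫(1/4, φ) is differentiable at φ = 0 with derivative equal to 7/16. -/
/-- The model supplied power `𝒫(P, φ) = Pₛ/2 + (S/2)·(C + √(C² - (3/2)·Pₛ - Pₛ²/C²))`,
where `C = cos(φ/2)`, `S = sin(φ/2)`, `Pₛ = min(P, C²/2)`; `Real.sqrt` is `0` on negative
arguments and division by zero is zero, as in Lean's conventions. -/
noncomputable def calP (P φ : ℝ) : ℝ :=
  let C := Real.cos (φ / 2)
  let Ps := min P (C ^ 2 / 2)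
  Ps / 2 + Real.sin (φ / 2) / 2 *
    (C + Real.sqrt (C ^ 2 - 3 / 2 * Ps - Ps ^ 2 / C ^ 2))

/-- Simplified local form of `calP (1/4)` near `0`. -/
noncomputable def calPloc (φ : ℝ) : ℝ :=
  1 / 8 + Real.sin (φ / 2) / 2 *
    (Real.cos (φ / 2) + Real.sqrt (Real.cos (φ / 2) ^ 2 - 3 / 8 - (1 / 16) / Real.cos (φ / 2) ^ 2))

lemma calPloc_hasDeriv : HasDerivAt calPloc (7 / 16) 0 := by
  have hhalf : HasDerivAt (fun φ : ℝ => φ / 2) (1 / 2) 0 := by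
    simpa using (hasDerivAt_id (0 : ℝ)).div_const 2
  have hcos : HasDerivAt (fun φ : ℝ => Real.cos (φ / 2)) 0 0 := by
    have := (Real.hasDerivAt_cos ((0 : ℝ) / 2)).comp 0 hhalf
    simpa using! this
  have hsin : HasDerivAt (fun φ : ℝ => Real.sin (φ / 2)) (1 / 2) 0 := by
    have := (Real.hasDerivAt_sin ((0 : ℝ) / 2)).comp 0 hhalf
    simpa using! this
  have hcos2 : HasDerivAt (fun φ : ℝ => Real.cos (φ / 2) ^ 2) 0 0 := by
    have := hcos.pow 2
    simpa using! this
  have hden : Real.cos ((0 : ℝ) / 2) ^ 2 ≠ 0 := by norm_num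
  have hdiv : HasDerivAt (fun φ : ℝ => (1 / 16 : ℝ) / Real.cos (φ / 2) ^ 2) 0 0 := by
    have := (hasDerivAt_const (0 : ℝ) (1 / 16 : ℝ)).div hcos2 hden
    simpa using! this
  have hu : HasDerivAt
      (fun φ : ℝ => Real.cos (φ / 2) ^ 2 - 3 / 8 - (1 / 16) / Real.cos (φ / 2) ^ 2) 0 0 := by
    have := (hcos2.sub_const (3 / 8)).sub hdiv
    simpa using! this
  have hu0 : Real.cos ((0 : ℝ) / 2) ^ 2 - 3 / 8 - (1 / 16) / Real.cos ((0 : ℝ) / 2) ^ 2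
      = 9 / 16 := by norm_num
  have hsqrt : HasDerivAt
      (fun φ : ℝ => Real.sqrt (Real.cos (φ / 2) ^ 2 - 3 / 8 - (1 / 16) / Real.cos (φ / 2) ^ 2))
      0 0 := by
    have hne : Real.cos ((0 : ℝ) / 2) ^ 2 - 3 / 8 - (1 / 16) / Real.cos ((0 : ℝ) / 2) ^ 2 ≠ 0 := by
      rw [hu0]; norm_num
    have := hu.sqrt hne
    simpa using! this
  have hsum : HasDerivAt
      (fun φ : ℝ => Real.cos (φ / 2) +
        Real.sqrt (Real.cos (φ / 2) ^ 2 - 3 / 8 - (1 / 16) / Real.cos (φ / 2) ^ 2)) 0 0 := by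
    simpa using! hcos.add hsqrt
  have hs2 : HasDerivAt (fun φ : ℝ => Real.sin (φ / 2) / 2) (1 / 4) 0 := by
    exact (hsin.div_const 2).congr_deriv (by norm_num)
  have hmul := hs2.mul hsum
  have h916 : Real.sqrt (9 / 16 : ℝ) = 3 / 4 := by
    rw [show (9 : ℝ) / 16 = (3 / 4) ^ 2 by norm_num, Real.sqrt_sq (by norm_num : (0:ℝ) ≤ 3/4)]
  have := (hasDerivAt_const (0 : ℝ) (1 / 8 : ℝ)).add hmul
  refine HasDerivAt.congr_deriv (f := calPloc) this ?_
  rw [hu0, h916]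
  norm_num [Real.cos_zero, Real.sin_zero]

/-- The function `φ ↦ 𝒫(1/4, φ)` is differentiable at `φ = 0` with derivative `7/16`. -/
theorem calP_deriv_at_NOP : HasDerivAt (fun φ : ℝ => calP (1 / 4) φ) (7 / 16) 0 := by
  have hev : ∀ᶠ φ in nhds (0 : ℝ), (fun φ : ℝ => calP (1 / 4) φ) φ = calPloc φ := by
    have hc : ContinuousAt (fun φ : ℝ => Real.cos (φ / 2) ^ 2 / 2) 0 := by fun_prop
    have h0 : Real.cos ((0 : ℝ) / 2) ^ 2 / 2 = 1 / 2 := by norm_num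
    have hgt : ∀ᶠ φ in nhds (0 : ℝ), (1 : ℝ) / 4 < Real.cos (φ / 2) ^ 2 / 2 := by
      rw [ContinuousAt, h0] at hc
      exact hc.eventually (eventually_gt_nhds (by norm_num))
    filter_upwards [hgt] with φ hφ
    have hmin : min (1 / 4 : ℝ) (Real.cos (φ / 2) ^ 2 / 2) = 1 / 4 := min_eq_left hφ.le
    simp only [calP, calPloc, hmin]
    norm_num
  exact calPloc_hasDeriv.congr_of_eventuallyEq hev
end

section
/- 𝒫(1/4, π − arctan(1/2)) = 1/8. Consequently, with mechanical power input P_mech = 1/8 and constant power demand P = 1/4, the point φ = π − arctan(1/2), φ' = 0 is a steady state (the saddle point) of the swing dynamics φ'' + D·φ' = P_mech − 𝒫(P, φ). -/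
lemma calP_key : calP (1 / 4) (Real.pi - Real.arctan (1 / 2)) = 1 / 8 := by
  set a := Real.arctan (1 / 2) with ha
  have hcpos : 0 < Real.cos a := Real.cos_arctan_pos _
  have ht : Real.tan a = 1 / 2 := Real.tan_arctan _
  have hsin : Real.sin a = Real.cos a / 2 := by
    have h := Real.tan_eq_sin_div_cos a
    rw [ht] at h
    field_simp at h
    linarith
  have hsq : Real.sin a ^ 2 + Real.cos a ^ 2 = 1 := Real.sin_sq_add_cos_sq a
  have hclt : Real.cos a < 1 := by nlinarith
  set C := Real.cos ((Real.pi - a) / 2) with hC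
  have hC2 : C ^ 2 = 1 / 2 - Real.cos a / 2 := by
    have h := Real.cos_sq ((Real.pi - a) / 2)
    rw [show 2 * ((Real.pi - a) / 2) = Real.pi - a by ring, Real.cos_pi_sub] at h
    rw [hC, h]; ring
  have hC2pos : 0 < C ^ 2 := by rw [hC2]; linarith
  have hCne : C ≠ 0 := by
    intro h; rw [h] at hC2pos; simp at hC2pos
  have hmin : min (1/4 : ℝ) (C ^ 2 / 2) = C ^ 2 / 2 := by
    apply min_eq_right; rw [hC2]; linarith
  have harg : C ^ 2 - 3 / 2 * (C ^ 2 / 2) - (C ^ 2 / 2) ^ 2 / C ^ 2 = 0 := by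
    field_simp; ring
  have hSC : Real.sin ((Real.pi - a) / 2) * C = Real.sin a / 2 := by
    have h2 : Real.sin (2 * ((Real.pi - a) / 2)) =
        2 * Real.sin ((Real.pi - a) / 2) * Real.cos ((Real.pi - a) / 2) :=
      Real.sin_two_mul _
    have : 2 * ((Real.pi - a) / 2) = Real.pi - a := by ring
    rw [this, Real.sin_pi_sub] at h2
    rw [hC]; linarith
  show min (1/4 : ℝ) (C ^ 2 / 2) / 2 + Real.sin ((Real.pi - a) / 2) / 2 *
      (C + Real.sqrt (C ^ 2 - 3 / 2 * min (1/4 : ℝ) (C ^ 2 / 2)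
        - (min (1/4 : ℝ) (C ^ 2 / 2)) ^ 2 / C ^ 2)) = 1 / 8
  rw [hmin, harg, Real.sqrt_zero]
  nlinarith [hSC, hC2, hsin]

/-- `𝒫(1/4, π - arctan(1/2)) = 1/8`; consequently, with `P_mech = 1/8` and constant power
demand `P = 1/4`, the constant trajectory at `φ = π - arctan(1/2)`, `φ' = 0` is a steady
state (the saddle point) of the swing dynamics `φ'' + D·φ' = P_mech - 𝒫(P, φ)`. -/
theorem saddle_point :
    calP (1 / 4) (Real.pi - Real.arctan (1 / 2)) = 1 / 8 ∧
    ∀ D : ℝ, ∀ t : ℝ,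
      deriv (deriv (fun _ : ℝ => Real.pi - Real.arctan (1 / 2))) t +
          D * deriv (fun _ : ℝ => Real.pi - Real.arctan (1 / 2)) t =
        1 / 8 - calP (1 / 4) ((fun _ : ℝ => Real.pi - Real.arctan (1 / 2)) t) := by
  refine ⟨calP_key, fun D t => ?_⟩
  simp only [deriv_const', deriv_const]
  rw [calP_key]; ring
end

section
/- 𝒫(0, arcsin(1/4)) = 1/8. Consequently, with mechanical power input P_mech = 1/8 and power demand suddenly dropped to P = 0, the point φ = arcsin(1/4), φ' = 0 is a steady state of the swing dynamics φ'' + D·φ' = P_mech − 𝒫(P, φ). -/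
lemma calP_zero : calP 0 (Real.arcsin (1 / 4)) = 1 / 8 := by
  have hφ : Real.arcsin (1 / 4) ≤ Real.pi / 2 := Real.arcsin_le_pi_div_two _
  have hφ0 : 0 ≤ Real.arcsin (1 / 4) := Real.arcsin_nonneg.2 (by norm_num)
  have hC : 0 < Real.cos (Real.arcsin (1 / 4) / 2) := by
    apply Real.cos_pos_of_mem_Ioo
    constructor <;> nlinarith [Real.pi_pos]
  have hmin : min (0:ℝ) (Real.cos (Real.arcsin (1 / 4) / 2) ^ 2 / 2) = 0 :=
    min_eq_left (by positivity)
  have hsq : Real.sqrt (Real.cos (Real.arcsin (1 / 4) / 2) ^ 2 - 3 / 2 * 0 - 0 ^ 2 /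
      Real.cos (Real.arcsin (1 / 4) / 2) ^ 2) = Real.cos (Real.arcsin (1 / 4) / 2) := by
    rw [show Real.cos (Real.arcsin (1 / 4) / 2) ^ 2 - 3 / 2 * 0 - 0 ^ 2 /
      Real.cos (Real.arcsin (1 / 4) / 2) ^ 2 = Real.cos (Real.arcsin (1 / 4) / 2) ^ 2 by ring]
    exact Real.sqrt_sq hC.le
  have hsin : Real.sin (Real.arcsin (1 / 4)) = 1 / 4 :=
    Real.sin_arcsin (by norm_num) (by norm_num)
  have hdouble := Real.sin_two_mul (Real.arcsin (1 / 4) / 2)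
  rw [show 2 * (Real.arcsin (1 / 4) / 2) = Real.arcsin (1 / 4) by ring, hsin] at hdouble
  unfold calP
  simp only [hmin, hsq]
  nlinarith [hdouble]

/-- `𝒫(0, arcsin(1/4)) = 1/8`; consequently, with `P_mech = 1/8` and power demand suddenly
dropped to `P = 0`, the constant trajectory at `φ = arcsin(1/4)`, `φ' = 0` is a steady state
of the swing dynamics `φ'' + D·φ' = P_mech - 𝒫(P, φ)`. -/
theorem zero_demand_fixed_point :
    calP 0 (Real.arcsin (1 / 4)) = 1 / 8 ∧
    ∀ D : ℝ, ∀ t : ℝ,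
      deriv (deriv (fun _ : ℝ => Real.arcsin (1 / 4))) t +
          D * deriv (fun _ : ℝ => Real.arcsin (1 / 4)) t =
        1 / 8 - calP 0 ((fun _ : ℝ => Real.arcsin (1 / 4)) t) := by
  refine ⟨calP_zero, fun D t => ?_⟩
  simp only [deriv_const']
  rw [calP_zero]
  ring
end

section
/- Let φ be a real number with 0 < φ < 2·arccos(3/5), and set C = cos(φ/2), S = sin(φ/2), so that 3/5 < C < 1 and S > 0. Let P₀ = C²·(5C − 3)/4. Then 0 < P₀ < C²/2, the radicand satisfies C² − (3/2)·P₀ − P₀²/C² = (5·C·S/4)², and the function P ↦ 𝒫(P, φ) is differentiable at P = P₀ with derivative equal to 0 (i.e., P₀ is a critical point of the supplied power as a function of demand). -/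
/-- For `0 < φ < 2·arccos(3/5)`, with `C = cos(φ/2)`, `S = sin(φ/2)` (so `3/5 < C < 1`,
`S > 0`) and `P₀ = C²·(5C - 3)/4`, one has `0 < P₀ < C²/2`, the radicand equals
`(5·C·S/4)²`, and `P ↦ 𝒫(P, φ)` is differentiable at `P₀` with derivative `0`
(i.e. `P₀` is a critical point of the supplied power as a function of the demand). -/
theorem critical_demand (φ C S P₀ : ℝ)
    (hφ0 : 0 < φ) (hφ1 : φ < 2 * Real.arccos (3 / 5))
    (hC : C = Real.cos (φ / 2)) (hS : S = Real.sin (φ / 2))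
    (hP₀ : P₀ = C ^ 2 * (5 * C - 3) / 4) :
    3 / 5 < C ∧ C < 1 ∧ 0 < S ∧
    0 < P₀ ∧ P₀ < C ^ 2 / 2 ∧
    C ^ 2 - 3 / 2 * P₀ - P₀ ^ 2 / C ^ 2 = (5 * C * S / 4) ^ 2 ∧
    HasDerivAt (fun P : ℝ => calP P φ) 0 P₀ := by
  have hhalf0 : 0 < φ / 2 := by linarith
  have harc : φ / 2 < Real.arccos (3 / 5) := by linarith
  have harc2 : Real.arccos (3 / 5) < Real.pi / 2 := by
    rw [Real.arccos_lt_pi_div_two]; norm_num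
  have hlt2 : φ / 2 < Real.pi / 2 := harc.trans harc2
  have hltpi : φ / 2 < Real.pi := hlt2.trans (by linarith [Real.pi_pos])
  have hC35 : 3 / 5 < C := by
    have := Real.cos_lt_cos_of_nonneg_of_le_pi hhalf0.le
      (le_trans harc2.le (by linarith [Real.pi_pos])) harc
    rwa [Real.cos_arccos (by norm_num) (by norm_num), ← hC] at this
  have hC1 : C < 1 := by
    have := Real.cos_lt_cos_of_nonneg_of_le_pi le_rfl hltpi.le hhalf0
    rwa [Real.cos_zero, ← hC] at this
  have hS0 : 0 < S := by
    rw [hS]; exact Real.sin_pos_of_pos_of_lt_pi hhalf0 hltpi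
  have hCpos : (0:ℝ) < C := by linarith
  have hC2 : (0:ℝ) < C ^ 2 := by positivity
  have hP0pos : 0 < P₀ := by
    rw [hP₀]; have : 0 < 5 * C - 3 := by linarith
    positivity
  have hP0lt : P₀ < C ^ 2 / 2 := by
    rw [hP₀]
    rw [div_lt_div_iff₀ (by norm_num) (by norm_num)]
    nlinarith
  have hS2 : S ^ 2 = 1 - C ^ 2 := by
    have := Real.sin_sq_add_cos_sq (φ / 2)
    rw [← hS, ← hC] at this; linarith
  have hrad : C ^ 2 - 3 / 2 * P₀ - P₀ ^ 2 / C ^ 2 = (5 * C * S / 4) ^ 2 := by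
    have h : (5 * C * S / 4) ^ 2 = 25 * C ^ 2 * (1 - C ^ 2) / 16 := by
      have h' : (5 * C * S / 4) ^ 2 = 25 * C ^ 2 * S ^ 2 / 16 := by ring
      rw [h', hS2]
    rw [hP₀, h]
    field_simp
    ring
  refine ⟨hC35, hC1, hS0, hP0pos, hP0lt, hrad, ?_⟩
  -- the derivative
  have hsqrt : Real.sqrt (C ^ 2 - 3 / 2 * P₀ - P₀ ^ 2 / C ^ 2) = 5 * C * S / 4 := by
    rw [hrad, Real.sqrt_sq (by positivity)]
  have hfne : C ^ 2 - 3 / 2 * P₀ - P₀ ^ 2 / C ^ 2 ≠ 0 := by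
    rw [hrad]; positivity
  have hinner : HasDerivAt (fun P : ℝ => C ^ 2 - 3 / 2 * P - P ^ 2 / C ^ 2)
      (-(3 / 2) - 2 * P₀ / C ^ 2) P₀ := by
    have h1 : HasDerivAt (fun P : ℝ => C ^ 2 - 3 / 2 * P) (-(3/2)) P₀ := by
      simpa using ((hasDerivAt_id P₀).const_mul (3/2)).const_sub (C ^ 2)
    have h2 : HasDerivAt (fun P : ℝ => P ^ 2 / C ^ 2) (2 * P₀ / C ^ 2) P₀ := by
      have := (hasDerivAt_pow 2 P₀).div_const (C ^ 2)
      simpa [mul_comm] using this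
    exact h1.sub h2
  have hg : HasDerivAt (fun P : ℝ => P / 2 + S / 2 *
      (C + Real.sqrt (C ^ 2 - 3 / 2 * P - P ^ 2 / C ^ 2))) 0 P₀ := by
    have hsq := (hinner.sqrt hfne)
    have hmain := ((hasDerivAt_id P₀).div_const 2).add
      ((hsq.const_add C).const_mul (S / 2))
    have heq : 1 / 2 + S / 2 * ((-(3 / 2) - 2 * P₀ / C ^ 2) /
        (2 * Real.sqrt (C ^ 2 - 3 / 2 * P₀ - P₀ ^ 2 / C ^ 2))) = 0 := by
      rw [hsqrt, hP₀]
      have h3 : C ^ 2 * (5 * C - 3) / 4 / C ^ 2 = (5 * C - 3) / 4 := by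
        field_simp
      rw [mul_div_assoc, h3]
      field_simp
      ring
    rw [← heq]
    exact hmain
  -- transfer to calP
  have hfin : (fun P : ℝ => calP P φ) =ᶠ[nhds P₀] (fun P : ℝ => P / 2 + S / 2 *
      (C + Real.sqrt (C ^ 2 - 3 / 2 * P - P ^ 2 / C ^ 2))) := by
    filter_upwards [Iio_mem_nhds hP0lt] with P hP
    simp only [calP, ← hC, ← hS]
    rw [min_eq_left (le_of_lt hP)]
  exact hg.congr_of_eventuallyEq hfin
end

section
/- Let n, m be positive integers, let f : ℝⁿ × ℝᵐ → ℝⁿ and H : ℝᵐ → ℝ be differentiable, and let x, β : ℝ → ℝⁿ and u : ℝ → ℝᵐ be differentiable curves such that for all t: (i) x'(t) = f(x(t), u(t)); (ii) for each i, (β_i)'(t) = −∑_j β_j(t)·(∂f_j/∂x_i)(x(t), u(t)); and (iii) the derivative at u(t) of the map v ↦ H(v) − ∑_j β_j(t)·f_j(x(t), v) is zero. Then the Hamiltonian ℋ(t) = H(u(t)) − ∑_j β_j(t)·f_j(x(t), u(t)) is constant in t. -/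
open scoped BigOperators

private lemma sum_single_smul (k : ℕ) (y : EuclideanSpace ℝ (Fin k)) :
    ∑ i, y i • EuclideanSpace.single i (1:ℝ) = y := by
  have := (EuclideanSpace.basisFun (Fin k) ℝ).sum_repr y
  simpa [EuclideanSpace.basisFun_apply, EuclideanSpace.basisFun_repr] using this

/-- Pontryagin/Euler–Lagrange conservation of the Hamiltonian: if `x' = f(x, u)` (state
equation), `βᵢ' = -∑ⱼ βⱼ·∂fⱼ/∂xᵢ` (costate equation), and `u(t)` is a stationary point of
`v ↦ H(v) - ∑ⱼ βⱼ·fⱼ(x, v)` (first-order minimum condition), then the Hamiltonian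
`ℋ(t) = H(u(t)) - ∑ⱼ βⱼ(t)·fⱼ(x(t), u(t))` is constant in `t`. -/
theorem hamiltonian_conserved (n m : ℕ) (hn : 0 < n) (hm : 0 < m)
    (f : EuclideanSpace ℝ (Fin n) × EuclideanSpace ℝ (Fin m) → EuclideanSpace ℝ (Fin n))
    (H : EuclideanSpace ℝ (Fin m) → ℝ)
    (hf : Differentiable ℝ f) (hH : Differentiable ℝ H)
    (x β : ℝ → EuclideanSpace ℝ (Fin n)) (u : ℝ → EuclideanSpace ℝ (Fin m))
    (hx : Differentiable ℝ x) (hβ : Differentiable ℝ β) (hu : Differentiable ℝ u)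
    (state : ∀ t : ℝ, deriv x t = f (x t, u t))
    (costate : ∀ t : ℝ, ∀ i : Fin n,
      deriv (fun s : ℝ => β s i) t =
        -∑ j : Fin n, β t j *
          fderiv ℝ (fun v : EuclideanSpace ℝ (Fin n) => f (v, u t) j) (x t)
            (EuclideanSpace.single i 1))
    (stationary : ∀ t : ℝ,
      fderiv ℝ (fun v : EuclideanSpace ℝ (Fin m) =>
        H v - ∑ j : Fin n, β t j * f (x t, v) j) (u t) = 0) :
    ∀ s t : ℝ,
      H (u s) - ∑ j : Fin n, β s j * f (x s, u s) j =
        H (u t) - ∑ j : Fin n, β t j * f (x t, u t) j := by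
  have key : ∀ t : ℝ, HasDerivAt (fun s : ℝ =>
      H (u s) - ∑ j : Fin n, β s j * f (x s, u s) j) 0 t := by
    intro t
    set p : EuclideanSpace ℝ (Fin n) × EuclideanSpace ℝ (Fin m) := (x t, u t) with hp
    set L := fderiv ℝ f p with hL
    set xd := deriv x t with hxd
    set ud := deriv u t with hud
    set βd := deriv β t with hβd
    -- x-slice partial derivative
    have hAslice : ∀ (jj : Fin n) (w : EuclideanSpace ℝ (Fin n)),
        fderiv ℝ (fun v : EuclideanSpace ℝ (Fin n) => f (v, u t) jj) (x t) w = L (w, 0) jj := by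
      intro jj w
      have h0 : HasFDerivAt (fun v : EuclideanSpace ℝ (Fin n) => (v, u t))
          ((ContinuousLinearMap.id ℝ (EuclideanSpace ℝ (Fin n))).prod 0) (x t) :=
        (hasFDerivAt_id _).prodMk (hasFDerivAt_const _ _)
      have h1 := (hf p).hasFDerivAt.comp (x t) h0
      have h2 := (EuclideanSpace.proj jj).hasFDerivAt.comp (x t) h1
      have h2' : HasFDerivAt (fun v : EuclideanSpace ℝ (Fin n) => f (v, u t) jj)
          ((EuclideanSpace.proj jj).comp (L.comp
            ((ContinuousLinearMap.id ℝ (EuclideanSpace ℝ (Fin n))).prod 0))) (x t) := h2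
      rw [h2'.fderiv]
      simp
    -- u-slice derivatives
    have hUslice : ∀ (jj : Fin n), HasFDerivAt
        (fun v : EuclideanSpace ℝ (Fin m) => f (x t, v) jj)
        ((EuclideanSpace.proj jj).comp (L.comp ((0 : EuclideanSpace ℝ (Fin m) →L[ℝ]
          EuclideanSpace ℝ (Fin n)).prod (ContinuousLinearMap.id ℝ (EuclideanSpace ℝ (Fin m))))))
        (u t) := by
      intro jj
      have h0 : HasFDerivAt (fun v : EuclideanSpace ℝ (Fin m) => ((x t), v))
          ((0 : EuclideanSpace ℝ (Fin m) →L[ℝ] EuclideanSpace ℝ (Fin n)).prod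
            (ContinuousLinearMap.id ℝ (EuclideanSpace ℝ (Fin m)))) (u t) :=
        (hasFDerivAt_const _ _).prodMk (hasFDerivAt_id _)
      have h1 := (hf p).hasFDerivAt.comp (u t) h0
      exact (EuclideanSpace.proj jj).hasFDerivAt.comp (u t) h1
    -- stationarity consequence
    have hstat : ∀ w : EuclideanSpace ℝ (Fin m),
        fderiv ℝ H (u t) w = ∑ j : Fin n, β t j * L (0, w) j := by
      intro w
      have hS : HasFDerivAt
          (fun v : EuclideanSpace ℝ (Fin m) => ∑ j : Fin n, β t j * f (x t, v) j)
          (∑ j : Fin n, β t j • ((EuclideanSpace.proj j).comp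
            (L.comp ((0 : EuclideanSpace ℝ (Fin m) →L[ℝ] EuclideanSpace ℝ (Fin n)).prod
              (ContinuousLinearMap.id ℝ (EuclideanSpace ℝ (Fin m))))))) (u t) :=
        HasFDerivAt.fun_sum fun j _ => (hUslice j).const_mul (β t j)
      have hHS := (hH (u t)).hasFDerivAt.fun_sub hS
      have h3 := hHS.fderiv
      rw [stationary t] at h3
      have h0 : fderiv ℝ H (u t) = ∑ j : Fin n, β t j • ((EuclideanSpace.proj j).comp
          (L.comp ((0 : EuclideanSpace ℝ (Fin m) →L[ℝ] EuclideanSpace ℝ (Fin n)).prod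
            (ContinuousLinearMap.id ℝ (EuclideanSpace ℝ (Fin m)))))) :=
        sub_eq_zero.mp h3.symm
      rw [h0]
      simp
    -- derivatives along the trajectory
    have hxt : HasDerivAt x xd t := (hx t).hasDerivAt
    have hut : HasDerivAt u ud t := (hu t).hasDerivAt
    have hβt : HasDerivAt β βd t := (hβ t).hasDerivAt
    have hpair : HasDerivAt (fun s => (x s, u s)) (xd, ud) t := hxt.prodMk hut
    have hfc : HasDerivAt (fun s => f (x s, u s)) (L (xd, ud)) t :=
      (hf p).hasFDerivAt.comp_hasDerivAt _ hpair
    have hfcj : ∀ j : Fin n, HasDerivAt (fun s => f (x s, u s) j) (L (xd, ud) j) t := by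
      intro j
      have h7 := ((EuclideanSpace.proj j : EuclideanSpace ℝ (Fin n) →L[ℝ]
        ℝ)).hasFDerivAt.comp_hasDerivAt t hfc
      exact h7
    have hβj : ∀ j : Fin n, HasDerivAt (fun s => β s j) (βd j) t := by
      intro j
      have h8 := ((EuclideanSpace.proj j : EuclideanSpace ℝ (Fin n) →L[ℝ]
        ℝ)).hasFDerivAt.comp_hasDerivAt t hβt
      exact h8
    have hHu : HasDerivAt (fun s => H (u s)) (fderiv ℝ H (u t) ud) t :=
      (hH (u t)).hasFDerivAt.comp_hasDerivAt _ hut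
    have hsum : HasDerivAt (fun s => ∑ j : Fin n, β s j * f (x s, u s) j)
        (∑ j : Fin n, (βd j * f p j + β t j * L (xd, ud) j)) t :=
      HasDerivAt.fun_sum fun j _ => (hβj j).mul (hfcj j)
    have hg : HasDerivAt (fun s => H (u s) - ∑ j : Fin n, β s j * f (x s, u s) j)
        (fderiv ℝ H (u t) ud - ∑ j : Fin n, (βd j * f p j + β t j * L (xd, ud) j)) t :=
      hHu.sub hsum
    -- compute the derivative value is 0
    have hxdval : xd = f p := state t
    have hβdval : ∀ j : Fin n,
        βd j = -∑ i : Fin n, β t i * L (EuclideanSpace.single j 1, 0) i := by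
      intro j
      have h1 : deriv (fun s : ℝ => β s j) t = βd j := (hβj j).deriv
      rw [← h1, costate t j]
      congr 1
      refine Finset.sum_congr rfl fun i _ => ?_
      rw [hAslice i (EuclideanSpace.single j 1)]
    have hdecomp : ((xd, 0) : EuclideanSpace ℝ (Fin n) × EuclideanSpace ℝ (Fin m))
        = ∑ i : Fin n, xd i •
          ((EuclideanSpace.single i (1:ℝ) : EuclideanSpace ℝ (Fin n)),
            (0 : EuclideanSpace ℝ (Fin m))) := by
      rw [Prod.ext_iff]
      constructor
      · rw [Prod.fst_sum]
        simpa using (sum_single_smul n xd).symm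
      · rw [Prod.snd_sum]
        simp
    have hLx : ∀ j : Fin n,
        L (xd, 0) j = ∑ i : Fin n, f p i * L (EuclideanSpace.single i 1, 0) j := by
      intro j
      have h4 : L ((xd, 0) : EuclideanSpace ℝ (Fin n) × EuclideanSpace ℝ (Fin m))
          = ∑ i : Fin n, xd i • L (EuclideanSpace.single i 1, 0) := by
        rw [hdecomp, map_sum]
        exact Finset.sum_congr rfl fun i _ => L.map_smul _ _
      have h2 := congrArg (fun y => (EuclideanSpace.proj j :
          EuclideanSpace ℝ (Fin n) →L[ℝ] ℝ) y) h4
      simp only [map_sum, map_smul] at h2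
      simpa [hxdval, smul_eq_mul] using h2
    have hLxu : ∀ j : Fin n, L (xd, ud) j = L (xd, 0) j + L (0, ud) j := by
      intro j
      have h5 : ((xd, ud) : EuclideanSpace ℝ (Fin n) × EuclideanSpace ℝ (Fin m))
          = (xd, 0) + (0, ud) := by simp
      rw [h5, map_add]
      rfl
    have hcross : ∑ j : Fin n, βd j * f p j = -∑ j : Fin n, β t j * L (xd, 0) j := by
      calc ∑ j : Fin n, βd j * f p j
          = ∑ j : Fin n, (-∑ i : Fin n, β t i * L (EuclideanSpace.single j 1, 0) i) * f p j := by
            refine Finset.sum_congr rfl fun j _ => ?_; rw [hβdval j]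
        _ = -∑ j : Fin n, ∑ i : Fin n, β t i * L (EuclideanSpace.single j 1, 0) i * f p j := by
            rw [← Finset.sum_neg_distrib]
            refine Finset.sum_congr rfl fun j _ => ?_
            rw [neg_mul, Finset.sum_mul]
        _ = -∑ i : Fin n, ∑ j : Fin n, β t i * L (EuclideanSpace.single j 1, 0) i * f p j := by
            rw [Finset.sum_comm]
        _ = -∑ i : Fin n, β t i * L (xd, 0) i := by
            congr 1
            refine Finset.sum_congr rfl fun i _ => ?_
            rw [hLx i, Finset.mul_sum]
            refine Finset.sum_congr rfl fun j _ => ?_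
            ring
    have hval : fderiv ℝ H (u t) ud
        - ∑ j : Fin n, (βd j * f p j + β t j * L (xd, ud) j) = 0 := by
      rw [hstat ud, Finset.sum_add_distrib, hcross]
      have h6 : ∑ j : Fin n, β t j * L (xd, ud) j
          = ∑ j : Fin n, β t j * L (xd, 0) j + ∑ j : Fin n, β t j * L (0, ud) j := by
        rw [← Finset.sum_add_distrib]
        refine Finset.sum_congr rfl fun j _ => ?_
        rw [hLxu j]; ring
      rw [h6]
      ring
    rw [← hval]
    exact hg
  intro s t
  exact is_const_of_deriv_eq_zero
    (fun r => (key r).differentiableAt)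
    (fun r => (key r).deriv) s t
end

section
/- Let D > 0 and let φ, ω : ℝ → ℝ be differentiable functions with φ'(t) = ω(t) and ω'(t) = D·ω(t) − (7/16)·φ(t) for all t, such that φ(t) → 0 and ω(t) → 0 as t → −∞ and ω² is integrable on (−∞, 0]. Then 128·D²·∫_{−∞}^{0} ω(t)² dt = 4·D·(7·φ(0)² + 16·ω(0)²). (Equivalently, the energy E = 7φ²/32 + ω²/2 satisfies dE/dt = D·ω² along such trajectories, so ∫_{−∞}^{0} ω² dt = E(0)/D.) -/
open MeasureTheory

/-- For the linearized most-probable-failure-scenario dynamics `φ' = ω`,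
`ω' = D·ω - (7/16)·φ` with `D > 0`, along any trajectory coming out of the origin as
`t → -∞` (with `ω²` integrable on `(-∞, 0]`) one has
`128·D²·∫_{-∞}^{0} ω² dt = 4·D·(7·φ(0)² + 16·ω(0)²)`. -/
theorem linearized_cost (D : ℝ) (hD : 0 < D) (φ ω : ℝ → ℝ)
    (hφ : Differentiable ℝ φ) (hω : Differentiable ℝ ω)
    (h1 : ∀ t : ℝ, deriv φ t = ω t)
    (h2 : ∀ t : ℝ, deriv ω t = D * ω t - 7 / 16 * φ t)
    (hφ0 : Filter.Tendsto φ Filter.atBot (nhds 0))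
    (hω0 : Filter.Tendsto ω Filter.atBot (nhds 0))
    (hint : IntegrableOn (fun t : ℝ => ω t ^ 2) (Set.Iic 0)) :
    128 * D ^ 2 * ∫ t in Set.Iic (0 : ℝ), ω t ^ 2 =
      4 * D * (7 * φ 0 ^ 2 + 16 * ω 0 ^ 2) := by
  set F : ℝ → ℝ := fun t => 4 * D * (7 * φ t ^ 2 + 16 * ω t ^ 2) with hF
  have hderiv : ∀ x ∈ Set.Iic (0 : ℝ), HasDerivAt F (128 * D ^ 2 * ω x ^ 2) x := by
    intro x _
    have hφ' : HasDerivAt φ (ω x) x := (hφ x).hasDerivAt.congr_deriv (h1 x)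
    have hω' : HasDerivAt ω (D * ω x - 7 / 16 * φ x) x :=
      (hω x).hasDerivAt.congr_deriv (h2 x)
    have : HasDerivAt F
        (4 * D * (7 * (2 * φ x * ω x) + 16 * (2 * ω x * (D * ω x - 7 / 16 * φ x)))) x := by
      exact (((hφ'.pow 2).const_mul 7).add ((hω'.pow 2).const_mul 16)).const_mul (4 * D)
        |>.congr_deriv (by ring)
    exact this.congr_deriv (by ring)
  have hFlim : Filter.Tendsto F Filter.atBot (nhds 0) := by
    have : Filter.Tendsto F Filter.atBot (nhds (4 * D * (7 * 0 ^ 2 + 16 * 0 ^ 2))) := by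
      exact (((hφ0.pow 2).const_mul 7).add ((hω0.pow 2).const_mul 16)).const_mul (4 * D)
    simpa using this
  have hint' : IntegrableOn (fun t : ℝ => 128 * D ^ 2 * ω t ^ 2) (Set.Iic 0) :=
    hint.const_mul _
  have key := MeasureTheory.integral_Iic_of_hasDerivAt_of_tendsto' hderiv hint' hFlim
  rw [MeasureTheory.integral_const_mul] at key
  simpa [hF] using key
end
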